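/- Let G be a finite group acting vertex-transitively on a finite connected cubic (3-regular) graph Γ, and let α be a vertex. Then the stabilizer G_α is a {2,3}-group, i.e., every prime dividing |G_α| is at most 3. -/

import Mathlib

theorem stmt_11 {V : Type*} [Fintype V] (Γ : SimpleGraph V)
    [DecidableRel Γ.Adj] (hconn : Γ.Connected)
    (hcubic : ∀ v : V, Γ.degree v = 3)
    (G : Subgroup (Equiv.Perm V))
    (haut : ∀ g ∈ G, ∀ u v : V, Γ.Adj (g u) (g v) ↔ Γ.Adj u v)
    (htrans : ∀ u v : V, ∃ g ∈ G, g u = v)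
    (α : V) :
    ∀ p : ℕ, p.Prime →
      p ∣ Nat.card (G ⊓ MulAction.stabilizer (Equiv.Perm V) α : Subgroup (Equiv.Perm V)) →
      p ≤ 3 := by
  intro p hp hdvd
  haveI : DecidableEq V := Classical.decEq V
  by_contra hle
  push_neg at hle
  haveI : Fact p.Prime := ⟨hp⟩
  set H := G ⊓ MulAction.stabilizer (Equiv.Perm V) α with hH
  haveI : Fintype H := Fintype.ofFinite _
  rw [Nat.card_eq_fintype_card] at hdvd
  obtain ⟨x, hx⟩ := exists_prime_orderOf_dvd_card p hdvd
  set g : Equiv.Perm V := (x : Equiv.Perm V) with hgdef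
  have hxm : g ∈ G ⊓ MulAction.stabilizer (Equiv.Perm V) α := x.2
  rw [Subgroup.mem_inf] at hxm
  have hgG : g ∈ G := hxm.1
  have hgα : g α = α := hxm.2
  have hgp : g ^ p = 1 := by
    have h1 : x ^ p = 1 := by rw [← hx]; exact pow_orderOf_eq_one x
    have := congrArg (Subtype.val) h1
    simpa using this
  have fix : ∀ v, g v = v → ∀ w, Γ.Adj v w → g w = w := by
    intro v hv w hw
    have hmem : ∀ u : V, u ∈ Γ.neighborSet v ↔ g u ∈ Γ.neighborSet v := by
      intro u
      simp only [SimpleGraph.mem_neighborSet]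
      conv_rhs => rw [← hv]
      exact (haut g hgG v u).symm
    set σ : Equiv.Perm (Γ.neighborSet v) := Equiv.Perm.subtypePerm g (fun u => (hmem u).symm) with hσ
    have hσp : σ ^ p = 1 := by
      rw [hσ, Equiv.Perm.subtypePerm_pow]
      ext u
      simp [Equiv.Perm.subtypePerm_apply, hgp]
    have hdiv : orderOf σ ∣ p := orderOf_dvd_of_pow_eq_one hσp
    have hσ1 : σ = 1 := by
      rcases (Nat.Prime.eq_one_or_self_of_dvd hp _ hdiv) with h1 | h2
      · exact orderOf_eq_one_iff.mp h1
      · exfalso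
        have hcard : Fintype.card (Equiv.Perm (Γ.neighborSet v)) = 6 := by
          rw [Fintype.card_perm, SimpleGraph.card_neighborSet_eq_degree, hcubic]
          decide
        have hd6 : p ∣ 6 := by
          rw [← h2, ← hcard]; exact orderOf_dvd_card
        have h23 : p ∣ 2 * 3 := by norm_num at hd6 ⊢; exact hd6
        rcases (Nat.Prime.dvd_mul hp).mp h23 with h | h
        · have := (Nat.prime_dvd_prime_iff_eq hp Nat.prime_two).mp h
          omega
        · have := (Nat.prime_dvd_prime_iff_eq hp Nat.prime_three).mp h
          omega
    have h3 := congrArg (fun e : Equiv.Perm (Γ.neighborSet v) => e ⟨w, hw⟩) hσ1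
    simpa [hσ, Equiv.Perm.subtypePerm_apply, Subtype.ext_iff] using h3
  have key : ∀ {a b : V}, Γ.Walk a b → g a = a → g b = b := by
    intro a b wlk
    induction wlk with
    | nil => exact fun h => h
    | cons h w ih => exact fun ha => ih (fix _ ha _ h)
  have hg1 : g = 1 := by
    ext v
    obtain ⟨wlk⟩ := hconn α v
    exact key wlk hgα
  have hx1 : x = 1 := Subtype.ext hg1
  rw [hx1, orderOf_one] at hx
  omega
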